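/- Let M and N be ℤ²-graded bimodules over a ℤ²-graded algebra B, with deformed module structures a*x = λ^{n₂(a)n₁(x)} ax, x*b = λ^{n₂(x)n₁(b)} xb. Then the map T_θ: (M ⊗_B N)_θ → M_θ ⊗_{B_θ} N_θ defined on homogeneous elements by T_θ(x ⊗ y) = λ^{−n₂(x)n₁(y)} x ⊗_θ y is well defined, i.e. it respects the balancing relations: T_θ(xb ⊗ y) = T_θ(x ⊗ by) for all homogeneous x ∈ M, b ∈ B, y ∈ N. -/

import Mathlib

/-- The map `T_θ(x ⊗ y) = λ^{−n₂(x)n₁(y)} x ⊗_θ y` respects the balancing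
relations: for homogeneous `x ∈ M`, `b ∈ B`, `y ∈ N`, `T_θ(xb ⊗ y) = T_θ(x ⊗ by)`,
where `⊗_θ` is balanced over the deformed algebra `B_θ` (deformed actions
`x*b = λ^{n₂(x)n₁(b)}xb`, `b*y = λ^{n₂(b)n₁(y)}by`). -/
theorem stmt_8 {B M N W : Type*} [Ring B] [Algebra ℂ B]
    [AddCommGroup M] [Module ℂ M] [AddCommGroup N] [Module ℂ N]
    [AddCommGroup W] [Module ℂ W]
    (l : ℂ) (hl : ‖l‖ = 1)
    (ℬ : ℤ × ℤ → Submodule ℂ B) (𝓜 : ℤ × ℤ → Submodule ℂ M) (𝓝 : ℤ × ℤ → Submodule ℂ N)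
    (actM : M → B → M) (actN : B → N → N)
    (tθ : M → N → W)
    (htθ_sl : ∀ (c : ℂ) (x : M) (y : N), tθ (c • x) y = c • tθ x y)
    (htθ_sr : ∀ (c : ℂ) (x : M) (y : N), tθ x (c • y) = c • tθ x y)
    (htθ_bal : ∀ (nx nb ny : ℤ × ℤ) (x : M) (b : B) (y : N),
      x ∈ 𝓜 nx → b ∈ ℬ nb → y ∈ 𝓝 ny →
      tθ (l ^ (nx.2 * nb.1) • actM x b) y = tθ x (l ^ (nb.2 * ny.1) • actN b y)) :
    ∀ (nx nb ny : ℤ × ℤ) (x : M) (b : B) (y : N),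
      x ∈ 𝓜 nx → b ∈ ℬ nb → y ∈ 𝓝 ny →
      l ^ (-((nx.2 + nb.2) * ny.1)) • tθ (actM x b) y
        = l ^ (-(nx.2 * (nb.1 + ny.1))) • tθ x (actN b y) := by
  intro nx nb ny x b y hx hb hy
  have hl0 : l ≠ 0 := by
    intro h; rw [h] at hl; simp at hl
  have h := htθ_bal nx nb ny x b y hx hb hy
  rw [htθ_sl, htθ_sr] at h
  have e1 : (-((nx.2 + nb.2) * ny.1)) = (-(nx.2*nb.1) - (nx.2+nb.2)*ny.1) + nx.2*nb.1 := by ring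
  have e2 : (-(nx.2 * (nb.1 + ny.1))) = (-(nx.2*nb.1) - (nx.2+nb.2)*ny.1) + nb.2*ny.1 := by ring
  rw [e1, e2, zpow_add₀ hl0, zpow_add₀ hl0, mul_smul, mul_smul, h]
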